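/- Let H be a complex Hilbert space, A, B, C, D bounded linear operators on H, and T = [[A,B],[C,D]] the operator matrix on H⊕H. Then w(T) ≥ max{w(A), w(D), w(B+C)/2, w(B−C)/2}. -/

import Mathlib

open scoped InnerProductSpace

/-- Numerical radius of a bounded linear operator on a complex inner product space. -/
noncomputable def numRadius {E : Type*} [NormedAddCommGroup E] [InnerProductSpace ℂ E]
    (T : E →L[ℂ] E) : ℝ :=
  sSup {r : ℝ | ∃ x : E, ‖x‖ = 1 ∧ r = ‖⟪T x, x⟫_ℂ‖}

/-- Numerical-radius orthogonality: `T ⊥_w A`. -/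
def nrOrth {E : Type*} [NormedAddCommGroup E] [InnerProductSpace ℂ E]
    (T A : E →L[ℂ] E) : Prop :=
  ∀ l : ℂ, numRadius T ≤ numRadius (T + l • A)

lemma numRadius_bddAbove {E : Type*} [NormedAddCommGroup E] [InnerProductSpace ℂ E]
    (T : E →L[ℂ] E) : BddAbove {r : ℝ | ∃ x : E, ‖x‖ = 1 ∧ r = ‖⟪T x, x⟫_ℂ‖} := by
  refine ⟨‖T‖, fun r hr => ?_⟩
  obtain ⟨x, hx, rfl⟩ := hr
  calc ‖⟪T x, x⟫_ℂ‖ ≤ ‖T x‖ * ‖x‖ := norm_inner_le_norm _ _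
    _ ≤ (‖T‖ * ‖x‖) * ‖x‖ := by
        exact mul_le_mul_of_nonneg_right (T.le_opNorm x) (norm_nonneg x)
    _ = ‖T‖ := by rw [hx]; ring

lemma numRadius_nonneg {E : Type*} [NormedAddCommGroup E] [InnerProductSpace ℂ E]
    (T : E →L[ℂ] E) : 0 ≤ numRadius T :=
  Real.sSup_nonneg (by rintro r ⟨x, hx, rfl⟩; exact norm_nonneg _)

lemma le_numRadius {E : Type*} [NormedAddCommGroup E] [InnerProductSpace ℂ E]
    (T : E →L[ℂ] E) (x : E) (hx : ‖x‖ = 1) : ‖⟪T x, x⟫_ℂ‖ ≤ numRadius T :=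
  le_csSup (numRadius_bddAbove T) ⟨x, hx, rfl⟩

section aux

variable {H : Type*} [NormedAddCommGroup H] [InnerProductSpace ℂ H]

lemma inner_symm_symm (a b x y : H) :
    ⟪(WithLp.equiv 2 (H × H)).symm (a, b), (WithLp.equiv 2 (H × H)).symm (x, y)⟫_ℂ
      = ⟪a, x⟫_ℂ + ⟪b, y⟫_ℂ := by
  rw [WithLp.prod_inner_apply]
  simp [WithLp.toLp_fst, WithLp.toLp_snd]

lemma norm_symm (x y : H) :
    ‖(WithLp.equiv 2 (H × H)).symm (x, y)‖ = Real.sqrt (‖x‖ ^ 2 + ‖y‖ ^ 2) := by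
  rw [WithLp.prod_norm_eq_of_L2]
  simp [WithLp.toLp_fst, WithLp.toLp_snd]

end aux

theorem stmt15 {H : Type*} [NormedAddCommGroup H] [InnerProductSpace ℂ H] [CompleteSpace H]
    (A B C D : H →L[ℂ] H)
    (T : WithLp 2 (H × H) →L[ℂ] WithLp 2 (H × H))
    (hT : ∀ x y : H, T ((WithLp.equiv 2 (H × H)).symm (x, y)) =
      (WithLp.equiv 2 (H × H)).symm (A x + B y, C x + D y)) :
    max (max (numRadius A) (numRadius D))
      (max (numRadius (B + C) / 2) (numRadius (B - C) / 2)) ≤ numRadius T := by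
  -- value of the quadratic form of T on unit-normalized vectors (x, ε•x)/√2
  have key : ∀ (x : H), ‖x‖ = 1 → ∀ ε : ℂ, ‖ε‖ = 1 →
      ∃ u : WithLp 2 (H × H), ‖u‖ = 1 ∧
        ⟪T u, u⟫_ℂ = (1/2 : ℂ) * (⟪A x, x⟫_ℂ + (starRingEnd ℂ ε) * ⟪B x, x⟫_ℂ
          + ε * ⟪C x, x⟫_ℂ + ⟪D x, x⟫_ℂ) := by
    intro x hx ε hε
    set c : ℂ := (((Real.sqrt 2)⁻¹ : ℝ) : ℂ)
    set w : WithLp 2 (H × H) := (WithLp.equiv 2 (H × H)).symm (x, ε • x)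
    refine ⟨c • w, ?_, ?_⟩
    · have hw : ‖w‖ = Real.sqrt 2 := by
        rw [norm_symm, norm_smul, hε, hx]; norm_num
      rw [norm_smul, hw]
      simp only [c, Complex.norm_real, Real.norm_eq_abs, abs_of_nonneg
        (inv_nonneg.2 (Real.sqrt_nonneg 2))]
      rw [inv_mul_cancel₀ (by positivity)]
    · have hTw : T w = (WithLp.equiv 2 (H × H)).symm (A x + B (ε • x), C x + D (ε • x)) :=
        hT x (ε • x)
      have h1 : ⟪T w, w⟫_ℂ = ⟪A x, x⟫_ℂ + (starRingEnd ℂ ε) * ⟪B x, x⟫_ℂ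
          + ε * ⟪C x, x⟫_ℂ + ⟪D x, x⟫_ℂ := by
        rw [hTw, inner_symm_symm]
        simp only [inner_add_left, map_smul, inner_smul_left, inner_smul_right]
        have : (starRingEnd ℂ ε) * ε = 1 := by
          rw [mul_comm, Complex.mul_conj]
          norm_cast
          rw [Complex.normSq_eq_norm_sq, hε]
          norm_num
        ring_nf
        rw [this]
        ring
      rw [map_smul, inner_smul_left, inner_smul_right, h1]
      have hc : (starRingEnd ℂ c) * c = 1/2 := by
        simp only [c, Complex.conj_ofReal]
        norm_cast
        rw [← Real.sqrt_inv, Real.mul_self_sqrt (by norm_num)]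
        norm_num
      rw [← mul_assoc, hc]
  -- for each unit x and ε with |ε|=1, the combination is bounded by 2 w(T)
  have key2 : ∀ (x : H), ‖x‖ = 1 → ∀ ε : ℂ, ‖ε‖ = 1 →
      ‖(starRingEnd ℂ ε) * ⟪B x, x⟫_ℂ + ε * ⟪C x, x⟫_ℂ‖ ≤ 2 * numRadius T := by
    intro x hx ε hε
    obtain ⟨u, hu, hu2⟩ := key x hx ε hε
    obtain ⟨v, hv, hv2⟩ := key x hx (-ε) (by simpa using hε)
    have hdiff : ⟪T u, u⟫_ℂ - ⟪T v, v⟫_ℂ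
        = (starRingEnd ℂ ε) * ⟪B x, x⟫_ℂ + ε * ⟪C x, x⟫_ℂ := by
      rw [hu2, hv2]; push_cast [map_neg]; ring
    calc ‖(starRingEnd ℂ ε) * ⟪B x, x⟫_ℂ + ε * ⟪C x, x⟫_ℂ‖
        = ‖⟪T u, u⟫_ℂ - ⟪T v, v⟫_ℂ‖ := by rw [hdiff]
      _ ≤ ‖⟪T u, u⟫_ℂ‖ + ‖⟪T v, v⟫_ℂ‖ := norm_sub_le _ _
      _ ≤ numRadius T + numRadius T := add_le_add (le_numRadius T u hu) (le_numRadius T v hv)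
      _ = 2 * numRadius T := by ring
  refine max_le (max_le ?_ ?_) (max_le ?_ ?_)
  · -- w(A) ≤ w(T)
    refine Real.sSup_le ?_ (numRadius_nonneg T)
    rintro r ⟨x, hx, rfl⟩
    set u : WithLp 2 (H × H) := (WithLp.equiv 2 (H × H)).symm (x, 0)
    have hu : ‖u‖ = 1 := by rw [norm_symm, hx]; simp
    have : ⟪T u, u⟫_ℂ = ⟪A x, x⟫_ℂ := by
      rw [hT x 0, inner_symm_symm]; simp
    rw [← this]
    exact le_numRadius T u hu
  · -- w(D) ≤ w(T)
    refine Real.sSup_le ?_ (numRadius_nonneg T)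
    rintro r ⟨x, hx, rfl⟩
    set u : WithLp 2 (H × H) := (WithLp.equiv 2 (H × H)).symm (0, x)
    have hu : ‖u‖ = 1 := by rw [norm_symm, hx]; simp
    have : ⟪T u, u⟫_ℂ = ⟪D x, x⟫_ℂ := by
      rw [hT 0 x, inner_symm_symm]; simp
    rw [← this]
    exact le_numRadius T u hu
  · -- w(B+C)/2 ≤ w(T)
    rw [div_le_iff₀ (by norm_num : (0:ℝ) < 2)]
    refine Real.sSup_le ?_ (mul_nonneg (numRadius_nonneg T) (by norm_num))
    rintro r ⟨x, hx, rfl⟩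
    have h := key2 x hx 1 (by simp)
    simp only [map_one, one_mul] at h
    have hg : ⟪(B + C) x, x⟫_ℂ = ⟪B x, x⟫_ℂ + ⟪C x, x⟫_ℂ := by
      simp [inner_add_left]
    rw [hg]
    linarith
  · -- w(B-C)/2 ≤ w(T)
    rw [div_le_iff₀ (by norm_num : (0:ℝ) < 2)]
    refine Real.sSup_le ?_ (mul_nonneg (numRadius_nonneg T) (by norm_num))
    rintro r ⟨x, hx, rfl⟩
    have h := key2 x hx Complex.I (by simp)
    have heq : ‖⟪(B - C) x, x⟫_ℂ‖
        = ‖(starRingEnd ℂ Complex.I) * ⟪B x, x⟫_ℂ + Complex.I * ⟪C x, x⟫_ℂ‖ := by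
      have : (starRingEnd ℂ Complex.I) * ⟪B x, x⟫_ℂ + Complex.I * ⟪C x, x⟫_ℂ
          = (-Complex.I) * ⟪(B - C) x, x⟫_ℂ := by
        simp only [ContinuousLinearMap.sub_apply, inner_sub_left, Complex.conj_I]
        ring
      rw [this, norm_mul]
      simp
    rw [heq]
    linarith
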